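/- Let Z ∈ ℝ^{n×q} with 0 < q < n, and let H_1, …, H_{r−1} ∈ ℝ^{q×q} be symmetric matrices with all entries in {0,1}, each H_j ≠ 0, and with pairwise disjoint supports (for each matrix position (k,l), at most one j has (H_j)_{kl} = 1). For v ∈ ℝ^r define Σ(v) = Z (Σ_{j=1}^{r−1} v_j H_j) Zᵀ + v_r I_n, fix ψ ∈ ℝ^r with Σ(ψ) positive definite, set A_j(ψ) = Σ(ψ)^{-1/2} Z H_j Zᵀ Σ(ψ)^{-1/2} for j < r and A_r(ψ) = Σ(ψ)^{-1}, and let I(ψ) ∈ ℝ^{r×r} have entries I(ψ)_{ij} = tr(A_i(ψ)A_j(ψ))/2. If Z has full column rank q, then I(ψ) is positive definite. -/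

import Mathlib

open Matrix

open Classical in
/-- The positive semidefinite square root of a matrix (junk value `0` off the
positive semidefinite matrices). -/
noncomputable def msqrt {ι : Type*} [Fintype ι] [DecidableEq ι] (M : Matrix ι ι ℝ) :
    Matrix ι ι ℝ :=
  if h : M.PosSemidef then
    (h.1.eigenvectorUnitary : Matrix ι ι ℝ) * diagonal (Real.sqrt ∘ h.1.eigenvalues) *
      (star h.1.eigenvectorUnitary : Matrix ι ι ℝ) else 0

/-- `Σ(v) = Z (∑_{j<r} v_j H_j) Zᵀ + v_r I_n`. -/
noncomputable def SigmaMat {n q r : ℕ} (Z : Matrix (Fin n) (Fin q) ℝ)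
    (H : Fin r → Matrix (Fin q) (Fin q) ℝ) (v : Fin (r + 1) → ℝ) :
    Matrix (Fin n) (Fin n) ℝ :=
  Z * (∑ j, v j.castSucc • H j) * Zᵀ + v (Fin.last r) • 1

/-- `A_j(ψ) = Σ(ψ)^{-1/2} Z H_j Zᵀ Σ(ψ)^{-1/2}` for `j < r` and `A_r(ψ) = Σ(ψ)⁻¹`. -/
noncomputable def Aj {n q r : ℕ} (Z : Matrix (Fin n) (Fin q) ℝ)
    (H : Fin r → Matrix (Fin q) (Fin q) ℝ) (ψ : Fin (r + 1) → ℝ) (j : Fin (r + 1)) :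
    Matrix (Fin n) (Fin n) ℝ :=
  Fin.lastCases (SigmaMat Z H ψ)⁻¹
    (fun i => (msqrt (SigmaMat Z H ψ))⁻¹ * (Z * H i * Zᵀ) * (msqrt (SigmaMat Z H ψ))⁻¹) j

/-- The Fisher information matrix `I(ψ)_{ij} = tr(A_i(ψ) A_j(ψ))/2`. -/
noncomputable def infoMat {n q r : ℕ} (Z : Matrix (Fin n) (Fin q) ℝ)
    (H : Fin r → Matrix (Fin q) (Fin q) ℝ) (ψ : Fin (r + 1) → ℝ) :
    Matrix (Fin (r + 1)) (Fin (r + 1)) ℝ :=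
  Matrix.of fun i j => (Aj Z H ψ i * Aj Z H ψ j).trace / 2

open Module
lemma trace_mul_transpose_pos' {m : Type*} [Fintype m] [DecidableEq m]
    (B : Matrix m m ℝ) (hB : B ≠ 0) : 0 < (B * Bᵀ).trace := by
  have h1 : (B * Bᵀ).trace = ∑ i, ∑ j, B i j ^ 2 := by
    simp [Matrix.trace, Matrix.mul_apply, Matrix.diag, sq]
  rw [h1]
  have h2 : ∃ i j, B i j ≠ 0 := by
    by_contra h; push_neg at h; exact hB (by ext i j; simpa using h i j)
  obtain ⟨i, j, hij⟩ := h2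
  refine Finset.sum_pos' (fun a _ => Finset.sum_nonneg fun b _ => sq_nonneg _)
    ⟨i, Finset.mem_univ i, Finset.sum_pos' (fun b _ => sq_nonneg _)
      ⟨j, Finset.mem_univ j, by positivity⟩⟩

lemma ker_exists' {a b : ℕ} (hab : b < a) (M : Matrix (Fin b) (Fin a) ℝ) :
    ∃ v : Fin a → ℝ, v ≠ 0 ∧ M *ᵥ v = 0 := by
  have h := M.mulVecLin.finrank_range_add_finrank_ker
  have h2 : finrank ℝ (LinearMap.range M.mulVecLin) ≤ b := by
    simpa using Submodule.finrank_le (LinearMap.range M.mulVecLin)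
  simp only [finrank_fintype_fun_eq_card, Fintype.card_fin] at h
  have hk : LinearMap.ker M.mulVecLin ≠ ⊥ := by
    intro hbot; rw [hbot] at h; simp at h; omega
  obtain ⟨v, hv, hv0⟩ := Submodule.exists_mem_ne_zero_of_ne_bot hk
  exact ⟨v, hv0, hv⟩

lemma sum_mulVec' {a : ℕ} {m : Type*} [Fintype m] {ι : Type*} (s : Finset ι)
    (f : ι → Matrix (Fin a) m ℝ) (v : m → ℝ) :
    (∑ i ∈ s, f i) *ᵥ v = ∑ i ∈ s, f i *ᵥ v := by
  ext i
  simp only [Matrix.mulVec, dotProduct, Matrix.sum_apply, Finset.sum_apply, Finset.sum_mul]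
  rw [Finset.sum_comm]

lemma cancel_left' {a b : ℕ} {m : Type*} [Fintype m] [DecidableEq m]
    (Z : Matrix (Fin a) (Fin b) ℝ) (hZ : Function.Injective Z.mulVecLin)
    (N : Matrix (Fin b) m ℝ) (h : Z * N = 0) : N = 0 := by
  ext j k
  have hcol : Z.mulVecLin (fun j => N j k) = Z.mulVecLin 0 := by
    funext i
    have := congrFun (congrFun h i) k
    simpa [Matrix.mulVecLin_apply, Matrix.mulVec, dotProduct, Matrix.mul_apply] using this
  have := congrFun (hZ hcol) j
  simpa using this

lemma inj_of_rank {a b : ℕ} (M : Matrix (Fin a) (Fin b) ℝ) (hr : M.rank = b) :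
    Function.Injective M.mulVecLin := by
  rw [← LinearMap.ker_eq_bot]
  have h := M.mulVecLin.finrank_range_add_finrank_ker
  rw [show finrank ℝ (LinearMap.range M.mulVecLin) = b from hr] at h
  simp only [finrank_fintype_fun_eq_card, Fintype.card_fin] at h
  exact Submodule.finrank_eq_zero.mp (by omega)

/-- If `0 < q < n`, the `H_j` are nonzero symmetric 0-1 matrices with pairwise
disjoint supports, and `Z` has full column rank `q`, then the Fisher information
`I(ψ)` is positive definite. -/
theorem stmt8 {n q r : ℕ} (hq : 0 < q) (hqn : q < n)
    (Z : Matrix (Fin n) (Fin q) ℝ)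
    (H : Fin r → Matrix (Fin q) (Fin q) ℝ) (hH : ∀ j, (H j).IsSymm)
    (h01 : ∀ j k l, H j k l = 0 ∨ H j k l = 1)
    (hne : ∀ j, H j ≠ 0)
    (hdisj : ∀ (k l : Fin q) (j j' : Fin r), H j k l = 1 → H j' k l = 1 → j = j')
    (hrank : Z.rank = q)
    (ψ : Fin (r + 1) → ℝ) (hψ : (SigmaMat Z H ψ).PosDef) :
    (infoMat Z H ψ).PosDef := by
  set S := SigmaMat Z H ψ with hSdef
  set R := msqrt S with hRdef'
  have hRdef : R = (hψ.posSemidef.1.eigenvectorUnitary : Matrix (Fin n) (Fin n) ℝ) *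
      diagonal (Real.sqrt ∘ hψ.posSemidef.1.eigenvalues) *
      (star hψ.posSemidef.1.eigenvectorUnitary : Matrix (Fin n) (Fin n) ℝ) := by
    rw [hRdef', msqrt, dif_pos hψ.posSemidef]
  have hRR : R * R = S := by
    rw [hRdef]
    have hU := Matrix.UnitaryGroup.star_mul_self hψ.posSemidef.1.eigenvectorUnitary
    have hD : diagonal (Real.sqrt ∘ hψ.posSemidef.1.eigenvalues) *
        diagonal (Real.sqrt ∘ hψ.posSemidef.1.eigenvalues) =
        diagonal (RCLike.ofReal ∘ hψ.posSemidef.1.eigenvalues) := by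
      rw [diagonal_mul_diagonal]; congr 1; funext i
      simp [Real.mul_self_sqrt (hψ.posSemidef.eigenvalues_nonneg i)]
    conv_rhs => rw [hψ.posSemidef.1.spectral_theorem, Unitary.conjStarAlgAut_apply]
    calc _ = (hψ.posSemidef.1.eigenvectorUnitary : Matrix (Fin n) (Fin n) ℝ) *
        (diagonal (Real.sqrt ∘ hψ.posSemidef.1.eigenvalues) *
          ((star hψ.posSemidef.1.eigenvectorUnitary : Matrix (Fin n) (Fin n) ℝ) *
            (hψ.posSemidef.1.eigenvectorUnitary : Matrix (Fin n) (Fin n) ℝ)) *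
          diagonal (Real.sqrt ∘ hψ.posSemidef.1.eigenvalues)) *
        (star hψ.posSemidef.1.eigenvectorUnitary : Matrix (Fin n) (Fin n) ℝ) := by
          simp only [Matrix.mul_assoc]
      _ = _ := by rw [hU, Matrix.mul_one, hD]
  have hSsym : Sᵀ = S := by
    ext i j; have := congrFun (congrFun hψ.isHermitian i) j
    simpa [Matrix.conjTranspose_apply] using this
  have hRsym : Rᵀ = R := by
    rw [hRdef, transpose_mul, transpose_mul, diagonal_transpose, Matrix.star_eq_conjTranspose,
      conjTranspose_eq_transpose_of_trivial, transpose_transpose, Matrix.mul_assoc]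
  have hRunit : IsUnit R.det := by
    have hd : R.det * R.det = S.det := by rw [← Matrix.det_mul, hRR]
    have := hψ.det_pos
    refine isUnit_iff_ne_zero.mpr fun h0 => ?_
    rw [h0, mul_zero] at hd; rw [← hd] at this; exact lt_irrefl _ this
  set A := Aj Z H ψ with hAdef
  have hAsym : ∀ i, (A i)ᵀ = A i := by
    intro i
    refine Fin.lastCases ?_ ?_ i
    · show (A (Fin.last r))ᵀ = A (Fin.last r)
      simp only [hAdef, Aj, Fin.lastCases_last]
      rw [Matrix.transpose_nonsing_inv, hSsym]
    · intro j
      show (A j.castSucc)ᵀ = A j.castSucc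
      simp only [hAdef, Aj, Fin.lastCases_castSucc, ← hRdef', ← hSdef]
      rw [Matrix.transpose_mul, Matrix.transpose_mul, Matrix.transpose_mul,
        Matrix.transpose_mul, Matrix.transpose_nonsing_inv, hRsym,
        Matrix.transpose_transpose, hH j]
      simp [Matrix.mul_assoc]
  rw [Matrix.posDef_iff_dotProduct_mulVec]
  constructor
  · ext i j
    simp only [Matrix.conjTranspose_apply, infoMat, Matrix.of_apply, star_trivial]
    rw [Matrix.trace_mul_comm]
  · intro x hx
    set B : Matrix (Fin n) (Fin n) ℝ := ∑ i, x i • A i with hBdef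
    have key : star x ⬝ᵥ (infoMat Z H ψ) *ᵥ x = (B * B).trace / 2 := by
      have hBB : (B * B).trace = ∑ i, ∑ j, x i * x j * (A i * A j).trace := by
        rw [hBdef, Finset.sum_mul_sum]
        rw [Matrix.trace_sum]
        refine Finset.sum_congr rfl fun i _ => ?_
        rw [Matrix.trace_sum]
        refine Finset.sum_congr rfl fun j _ => ?_
        rw [smul_mul_assoc, mul_smul_comm, Matrix.trace_smul, Matrix.trace_smul]
        simp [mul_assoc]
      rw [hBB]
      simp only [star_trivial, dotProduct, Matrix.mulVec, infoMat, Matrix.of_apply,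
        dotProduct, Finset.mul_sum, Finset.sum_div]
      refine Finset.sum_congr rfl fun i _ => Finset.sum_congr rfl fun j _ => ?_
      rw [← hAdef]
      ring
    have hBsym : Bᵀ = B := by
      rw [hBdef, Matrix.transpose_sum]
      exact Finset.sum_congr rfl fun i _ => by rw [Matrix.transpose_smul, hAsym]
    have hBne : B ≠ 0 := by
      intro hB0
      apply hx
      set C : Matrix (Fin n) (Fin n) ℝ :=
        ∑ j : Fin r, x j.castSucc • (Z * H j * Zᵀ) + x (Fin.last r) • 1 with hCdef
      have hBC : B = R⁻¹ * C * R⁻¹ := by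
        rw [hBdef, Fin.sum_univ_castSucc]
        have h1 : ∀ j : Fin r, A j.castSucc = R⁻¹ * (Z * H j * Zᵀ) * R⁻¹ := by
          intro j; simp only [hAdef, Aj, Fin.lastCases_castSucc, ← hRdef', ← hSdef]
        have h2 : A (Fin.last r) = R⁻¹ * 1 * R⁻¹ := by
          simp only [hAdef, Aj, Fin.lastCases_last, ← hSdef, ← hRR,
            Matrix.mul_inv_rev, Matrix.mul_one]
        rw [h2, hCdef, Matrix.mul_add, Matrix.add_mul, Finset.mul_sum, Finset.sum_mul]
        congr 1
        · exact Finset.sum_congr rfl fun j _ => by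
            rw [h1 j, mul_smul_comm, smul_mul_assoc]
        · rw [mul_smul_comm, smul_mul_assoc]
      have hC0 : C = 0 := by
        have hRBR : R * B * R = C := by
          rw [hBC]
          simp only [← Matrix.mul_assoc]
          rw [Matrix.mul_nonsing_inv _ hRunit, Matrix.one_mul, Matrix.mul_assoc,
            Matrix.nonsing_inv_mul _ hRunit, Matrix.mul_one]
        rw [← hRBR, hB0, Matrix.mul_zero, Matrix.zero_mul]
      obtain ⟨v, hv0, hvker⟩ := ker_exists' hqn Zᵀ
      have hxr : x (Fin.last r) = 0 := by
        have hCv : C *ᵥ v = 0 := by rw [hC0, Matrix.zero_mulVec]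
        rw [hCdef, Matrix.add_mulVec, sum_mulVec'] at hCv
        have hzero : ∀ j : Fin r, (x j.castSucc • (Z * H j * Zᵀ)) *ᵥ v = 0 := by
          intro j
          rw [Matrix.smul_mulVec, ← Matrix.mulVec_mulVec, hvker]
          simp
        rw [Finset.sum_congr rfl fun j _ => hzero j] at hCv
        simp only [Finset.sum_const_zero, zero_add, Matrix.smul_mulVec,
          Matrix.one_mulVec] at hCv
        exact (smul_eq_zero.mp hCv).resolve_right hv0
      set M0 : Matrix (Fin q) (Fin q) ℝ := ∑ j, x j.castSucc • H j with hM0def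
      have hZM : Z * M0 * Zᵀ = 0 := by
        have heq : Z * M0 * Zᵀ = ∑ j, x j.castSucc • (Z * H j * Zᵀ) := by
          rw [hM0def, Matrix.mul_sum, Matrix.sum_mul]
          exact Finset.sum_congr rfl fun j _ => by rw [Matrix.mul_smul, Matrix.smul_mul]
        rw [heq]
        have := hC0
        rw [hCdef, hxr, zero_smul, add_zero] at this
        exact this
      have hZinj := inj_of_rank Z hrank
      have hM0Zt : M0 * Zᵀ = 0 :=
        cancel_left' Z hZinj _ (by rw [← Matrix.mul_assoc]; exact hZM)
      have hM0t : M0ᵀ = 0 := by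
        apply cancel_left' Z hZinj
        have := congrArg Matrix.transpose hM0Zt
        rwa [Matrix.transpose_mul, Matrix.transpose_transpose, Matrix.transpose_zero]
          at this
      have hM0 : M0 = 0 := by
        have := congrArg Matrix.transpose hM0t
        rwa [Matrix.transpose_transpose, Matrix.transpose_zero] at this
      have hxj : ∀ j : Fin r, x j.castSucc = 0 := by
        intro j
        obtain ⟨k, l, hkl⟩ : ∃ k l, H j k l = 1 := by
          by_contra h
          push_neg at h
          apply hne j
          ext k l
          rcases h01 j k l with h0 | h1
          · simpa using h0
          · exact absurd h1 (h k l)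
        have hMkl := congrFun (congrFun hM0 k) l
        rw [hM0def] at hMkl
        simp only [Matrix.sum_apply, Matrix.smul_apply, smul_eq_mul,
          Matrix.zero_apply] at hMkl
        rw [Finset.sum_eq_single j] at hMkl
        · rw [hkl, mul_one] at hMkl; exact hMkl
        · intro j' _ hj'
          rcases h01 j' k l with h0 | h1
          · rw [h0, mul_zero]
          · exact absurd (hdisj k l j' j h1 hkl) hj'
        · intro hj; exact absurd (Finset.mem_univ j) hj
      funext i
      exact Fin.lastCases hxr hxj i
    rw [key, ← hBsym]
    nth_rewrite 1 [hBsym]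
    have := trace_mul_transpose_pos' B hBne
    linarith
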